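/- Let N ≥ 2, π_0,...,π_N > 0, 0 ≤ v_0 < ... < v_N, and p with u_N(p) > 0 and u_k(p) < 0 for k = 0,...,N−1. Then for q ∈ [0,1]^{N+1} with q_{j-1} ≥ ((j-1)/j) q_j for all j, the inequality Σ_j π_j q_j (v_j − p) ≥ u_N(p) holds if and only if q = q^N, i.e., q_j = j/N for all j. -/

import Mathlib

/-- The vectors Δ^k: Δ^0 = (1,0,...,0), and Δ^k_j = (j/k)·𝟙[j ≤ k] for k ≥ 1. -/
noncomputable def Delta (k j : ℕ) : ℝ :=
  if k = 0 then (if j = 0 then 1 else 0) else if j ≤ k then (j : ℝ) / (k : ℝ) else 0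

/-- if u_N(p) > 0 and u_k(p) < 0 for k < N, then for q ∈ Q the
receiver's utility is at least u_N(p) iff q = q^N, i.e. q_j = j/N. -/
theorem stmt15 (N : ℕ) (hN : 2 ≤ N) (P v : ℕ → ℝ) (p : ℝ)
    (hP : ∀ j ≤ N, 0 < P j)
    (hv0 : 0 ≤ v 0) (hv : ∀ j < N, v j < v (j + 1))
    (huN : 0 < ∑ j ∈ Finset.range (N + 1), P j * Delta N j * (v j - p))
    (huk : ∀ k < N, ∑ j ∈ Finset.range (N + 1), P j * Delta k j * (v j - p) < 0)
    (q : ℕ → ℝ)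
    (hq01 : ∀ j ≤ N, 0 ≤ q j ∧ q j ≤ 1)
    (hchain : ∀ j, 1 ≤ j → j ≤ N → q (j - 1) ≥ (((j : ℝ) - 1) / (j : ℝ)) * q j) :
    (∑ j ∈ Finset.range (N + 1), P j * Delta N j * (v j - p) ≤
        ∑ j ∈ Finset.range (N + 1), P j * q j * (v j - p)) ↔
      ∀ j ≤ N, q j = (j : ℝ) / (N : ℝ) := by
  have hNne : N ≠ 0 := by omega
  have hDN : ∀ j ≤ N, Delta N j = (j : ℝ) / (N : ℝ) := by
    intro j hj
    simp [Delta, hNne, hj]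
  constructor
  · -- forward direction
    intro h
    -- the telescoping decomposition
    set r : ℕ → ℝ := fun j => if 1 ≤ j ∧ j ≤ N then q j / j else 0 with hr
    set α : ℕ → ℝ := fun k => if k = 0 then q 0 else (k : ℝ) * (r k - r (k + 1)) with hα
    have hrz : r (N + 1) = 0 := by
      simp only [hr]
      rw [if_neg (by omega)]
    have hαN : α N = q N := by
      simp only [hα, hr]
      rw [if_neg hNne, if_pos (by omega : 1 ≤ N ∧ N ≤ N), if_neg (by omega)]
      field_simp
      ring
    -- Claim A : decomposition of q
    have hA : ∀ j ≤ N, q j = ∑ k ∈ Finset.range (N + 1), α k * Delta k j := by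
      intro j hj
      rcases Nat.eq_zero_or_pos j with hj0 | hj1
      · subst hj0
        rw [Finset.sum_eq_single 0]
        · simp [hα, Delta]
        · intro k _ hk
          have : Delta k 0 = 0 := by
            simp [Delta, hk, Nat.pos_of_ne_zero hk]
          rw [this, mul_zero]
        · intro hmem
          exact absurd (Finset.mem_range.mpr (by omega)) hmem
      · -- j ≥ 1
        rw [Finset.range_eq_Ico, ← Finset.sum_Ico_consecutive _ (Nat.zero_le j)
            (by omega : j ≤ N + 1)]
        have h1 : ∑ k ∈ Finset.Ico 0 j, α k * Delta k j = 0 := by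
          apply Finset.sum_eq_zero
          intro k hk
          rw [Finset.mem_Ico] at hk
          have hkj : k < j := hk.2
          have : Delta k j = 0 := by
            rcases Nat.eq_zero_or_pos k with hk0 | hk1
            · simp [Delta, hk0, (show j ≠ 0 by omega)]
            · simp [Delta, (show k ≠ 0 by omega), (show ¬ j ≤ k by omega)]
          rw [this, mul_zero]
        have h2 : ∑ k ∈ Finset.Ico j (N + 1), α k * Delta k j
            = ∑ k ∈ Finset.Ico j (N + 1), (j : ℝ) * (r k - r (k + 1)) := by
          apply Finset.sum_congr rfl
          intro k hk
          rw [Finset.mem_Ico] at hk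
          have hk1 : 1 ≤ k := le_trans hj1 hk.1
          have hkne : (k : ℝ) ≠ 0 := by positivity
          simp only [hα, Delta]
          rw [if_neg (by omega), if_neg (by omega : ¬ k = 0), if_pos hk.1]
          field_simp
        have h3 : ∑ k ∈ Finset.Ico j (N + 1), (r k - r (k + 1)) = r j - r (N + 1) := by
          rw [Finset.sum_Ico_eq_sub _ (by omega : j ≤ N + 1)]
          rw [Finset.sum_range_sub' r, Finset.sum_range_sub' r]
          ring
        rw [h1, h2, ← Finset.mul_sum, h3, hrz, sub_zero]
        simp only [hr]
        rw [if_pos ⟨hj1, hj⟩]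
        have : (j : ℝ) ≠ 0 := by positivity
        field_simp
        ring
    -- Claim B: utility decomposition
    have hB : ∑ j ∈ Finset.range (N + 1), P j * q j * (v j - p)
        = ∑ k ∈ Finset.range (N + 1),
            α k * ∑ j ∈ Finset.range (N + 1), P j * Delta k j * (v j - p) := by
      have : ∑ j ∈ Finset.range (N + 1), P j * q j * (v j - p)
          = ∑ j ∈ Finset.range (N + 1), ∑ k ∈ Finset.range (N + 1),
              α k * (P j * Delta k j * (v j - p)) := by
        apply Finset.sum_congr rfl
        intro j hj
        rw [Finset.mem_range] at hj
        rw [hA j (by omega), Finset.mul_sum, Finset.sum_mul]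
        apply Finset.sum_congr rfl
        intro k _
        ring
      rw [this, Finset.sum_comm]
      apply Finset.sum_congr rfl
      intro k _
      rw [Finset.mul_sum]
    -- Claim C: nonnegativity of α
    have hC : ∀ k ≤ N, 0 ≤ α k := by
      intro k hk
      rcases Nat.eq_zero_or_pos k with hk0 | hk1
      · subst hk0; simpa [hα] using (hq01 0 (by omega)).1
      · simp only [hα]
        rw [if_neg (by omega)]
        apply mul_nonneg (by positivity)
        rcases eq_or_lt_of_le hk with hkN | hkN
        · rw [hkN, hrz, sub_zero]
          simp only [hr]
          rw [if_pos ⟨by omega, le_rfl⟩]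
          have h0 := (hq01 N le_rfl).1
          positivity
        · -- k < N, use the chain condition with j = k+1
          have hc := hchain (k + 1) (by omega) (by omega)
          have hkk : (k + 1 : ℕ) - 1 = k := by omega
          rw [hkk] at hc
          push_cast at hc
          have hsimp : ((k : ℝ) + 1) - 1 = (k : ℝ) := by ring
          rw [hsimp] at hc
          have hkpos : (0:ℝ) < (k : ℝ) := by exact_mod_cast hk1
          have hk1pos : (0:ℝ) < (k : ℝ) + 1 := by linarith
          have hmul : (k : ℝ) * q (k + 1) ≤ q k * ((k : ℝ) + 1) := by
            rw [ge_iff_le, div_mul_eq_mul_div, div_le_iff₀ hk1pos] at hc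
            linarith
          simp only [hr]
          rw [if_pos ⟨by omega, by omega⟩, if_pos ⟨by omega, by omega⟩]
          push_cast
          rw [sub_nonneg, div_le_div_iff₀ hk1pos hkpos]
          linarith
    -- now use the hypothesis
    rw [hB] at h
    set uN : ℝ := ∑ j ∈ Finset.range (N + 1), P j * Delta N j * (v j - p) with huNdef
    rw [Finset.sum_range_succ, ← huNdef] at h
    have hterm_nonpos : ∀ k ∈ Finset.range N,
        α k * ∑ j ∈ Finset.range (N + 1), P j * Delta k j * (v j - p) ≤ 0 := by
      intro k hk
      rw [Finset.mem_range] at hk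
      exact mul_nonpos_of_nonneg_of_nonpos (hC k (by omega)) (le_of_lt (huk k hk))
    have hS : ∑ k ∈ Finset.range N,
        α k * ∑ j ∈ Finset.range (N + 1), P j * Delta k j * (v j - p) ≤ 0 :=
      Finset.sum_nonpos hterm_nonpos
    have hαN1 : α N ≤ 1 := by rw [hαN]; exact (hq01 N le_rfl).2
    have h1 : α N * uN ≤ uN := mul_le_of_le_one_left (le_of_lt huN) hαN1
    have hS0 : ∑ k ∈ Finset.range N,
        α k * ∑ j ∈ Finset.range (N + 1), P j * Delta k j * (v j - p) = 0 :=
      le_antisymm hS (by linarith)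
    have hterm0 := (Finset.sum_eq_zero_iff_of_nonpos hterm_nonpos).mp hS0
    have hα0 : ∀ k < N, α k = 0 := by
      intro k hk
      have h0 := hterm0 k (Finset.mem_range.mpr hk)
      rcases mul_eq_zero.mp h0 with h' | h'
      · exact h'
      · exact absurd h' (ne_of_lt (huk k hk))
    have hαN1' : α N = 1 := by
      have h2 : uN ≤ α N * uN := by linarith
      refine le_antisymm hαN1 ?_
      nlinarith
    intro j hj
    rw [hA j hj]
    rw [Finset.sum_eq_single_of_mem N (Finset.mem_range.mpr (by omega))]
    · rw [hαN1', one_mul, hDN j hj]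
    · intro k hk hne
      rw [Finset.mem_range] at hk
      rw [hα0 k (by omega), zero_mul]
  · -- reverse direction
    intro hq
    apply le_of_eq
    apply Finset.sum_congr rfl
    intro j hj
    rw [Finset.mem_range] at hj
    rw [hq j (by omega), hDN j (by omega)]
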